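/- In the setting above, for each fixed μ ∈ (0,1] the function t ↦ φ(t,μ) = ψ(a - t,μ) + t - ψ(t - b,μ) is continuously differentiable with |∂φ/∂t (t,μ)| ≤ 1 for all t ∈ ℝ, hence φ(·,μ) is 1-Lipschitz. -/

import Mathlib

/-- The piecewise smoothing function of `max{t,0}` from equation (3.8) of the paper. -/
noncomputable def psi (μ t : ℝ) : ℝ :=
  if t ≤ 0 then 0
  else if t ≤ μ then t ^ 2 / (2 * μ)
  else if t ≤ μ + Real.sqrt μ then (1 / 4) * (t - μ) ^ 2 + t - μ / 2
  else if t ≤ μ + 2 * Real.sqrt μ then -(1 / 4) * (t - μ - 2 * Real.sqrt μ) ^ 2 + t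
  else t

/-- The derivative of `psi μ`. -/
noncomputable def psiD (μ t : ℝ) : ℝ :=
  if t ≤ 0 then 0
  else if t ≤ μ then t / μ
  else if t ≤ μ + Real.sqrt μ then (t - μ) / 2 + 1
  else if t ≤ μ + 2 * Real.sqrt μ then -(t - μ - 2 * Real.sqrt μ) / 2 + 1
  else 1

open Set Filter

/-- Gluing lemma for a derivative at a junction point. -/
lemma glue_hasDerivAt {f g h : ℝ → ℝ} {d c : ℝ}
    (hg : HasDerivAt g d c) (hh : HasDerivAt h d c)
    (h1 : f =ᶠ[nhdsWithin c (Iic c)] g) (h2 : f =ᶠ[nhdsWithin c (Ici c)] h)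
    (hfc : f c = g c) : HasDerivAt f d c := by
  have H1 : HasDerivWithinAt f d (Iic c) c :=
    (hg.hasDerivWithinAt).congr_of_eventuallyEq h1 hfc
  have hfc2 : f c = h c := h2.self_of_nhdsWithin (mem_Ici.2 le_rfl)
  have H2 : HasDerivWithinAt f d (Ici c) c :=
    (hh.hasDerivWithinAt).congr_of_eventuallyEq h2 hfc2
  have := H1.union H2
  rw [Iic_union_Ici] at this
  exact this.hasDerivAt (by simp)

section pieces

variable {μ : ℝ} (hμ0 : 0 < μ)

lemma psi_eq0 (t : ℝ) (ht : t ≤ 0) : psi μ t = 0 := by simp [psi, ht]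

include hμ0

lemma psi_eq1 (t : ℝ) (ht : t ∈ Icc 0 μ) : psi μ t = t ^ 2 / (2 * μ) := by
  unfold psi
  split_ifs with h1 h2 h3 h4
  · have h : t = 0 := le_antisymm h1 ht.1
    subst h; simp
  · rfl
  · exact absurd ht.2 h2
  · exact absurd ht.2 h2
  · exact absurd ht.2 h2

lemma psi_eq2 (t : ℝ) (ht : t ∈ Icc μ (μ + Real.sqrt μ)) :
    psi μ t = (1 / 4) * (t - μ) ^ 2 + t - μ / 2 := by
  unfold psi
  split_ifs with h1 h2 h3 h4
  · linarith [ht.1]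
  · have h : t = μ := le_antisymm h2 ht.1
    subst h; field_simp; ring
  · rfl
  · exact absurd ht.2 h3
  · exact absurd ht.2 h3

lemma psi_eq3 (t : ℝ) (ht : t ∈ Icc (μ + Real.sqrt μ) (μ + 2 * Real.sqrt μ)) :
    psi μ t = -(1 / 4) * (t - μ - 2 * Real.sqrt μ) ^ 2 + t := by
  have hs : 0 < Real.sqrt μ := Real.sqrt_pos.2 hμ0
  have hsq : Real.sqrt μ ^ 2 = μ := Real.sq_sqrt hμ0.le
  unfold psi
  split_ifs with h1 h2 h3 h4
  · linarith [ht.1]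
  · linarith [ht.1]
  · have h : t = μ + Real.sqrt μ := le_antisymm h3 ht.1
    subst h; linear_combination hsq / 2
  · rfl
  · exact absurd ht.2 h4

lemma psi_eq4 (t : ℝ) (ht : t ∈ Ici (μ + 2 * Real.sqrt μ)) : psi μ t = t := by
  have hs : 0 < Real.sqrt μ := Real.sqrt_pos.2 hμ0
  unfold psi
  split_ifs with h1 h2 h3 h4
  · linarith [mem_Ici.1 ht]
  · linarith [mem_Ici.1 ht]
  · linarith [mem_Ici.1 ht]
  · have h : t = μ + 2 * Real.sqrt μ := le_antisymm h4 ht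
    subst h; ring
  · rfl

lemma psiD_eq0 (t : ℝ) (ht : t ≤ 0) : psiD μ t = 0 := by simp [psiD, ht]

lemma psiD_eq1 (t : ℝ) (ht : t ∈ Icc 0 μ) : psiD μ t = t / μ := by
  unfold psiD
  split_ifs with h1 h2
  · have h : t = 0 := le_antisymm h1 ht.1
    subst h; simp
  · rfl
  · exact absurd ht.2 h2
  · exact absurd ht.2 h2
  · exact absurd ht.2 h2

lemma psiD_eq2 (t : ℝ) (ht : t ∈ Icc μ (μ + Real.sqrt μ)) :
    psiD μ t = (t - μ) / 2 + 1 := by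
  have hs : 0 < Real.sqrt μ := Real.sqrt_pos.2 hμ0
  unfold psiD
  split_ifs with h1 h2 h3
  · linarith [ht.1]
  · have h : t = μ := le_antisymm h2 ht.1
    subst h
    rw [div_self hμ0.ne']
    ring
  · rfl
  · exact absurd ht.2 h3
  · exact absurd ht.2 h3

lemma psiD_eq3 (t : ℝ) (ht : t ∈ Icc (μ + Real.sqrt μ) (μ + 2 * Real.sqrt μ)) :
    psiD μ t = -(t - μ - 2 * Real.sqrt μ) / 2 + 1 := by
  have hs : 0 < Real.sqrt μ := Real.sqrt_pos.2 hμ0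
  unfold psiD
  split_ifs with h1 h2 h3 h4
  · linarith [ht.1]
  · linarith [ht.1]
  · have h : t = μ + Real.sqrt μ := le_antisymm h3 ht.1
    subst h; ring
  · rfl
  · exact absurd ht.2 h4

lemma psiD_eq4 (t : ℝ) (ht : t ∈ Ici (μ + 2 * Real.sqrt μ)) : psiD μ t = 1 := by
  have hs : 0 < Real.sqrt μ := Real.sqrt_pos.2 hμ0
  unfold psiD
  split_ifs with h1 h2 h3 h4
  · linarith [mem_Ici.1 ht]
  · linarith [mem_Ici.1 ht]
  · linarith [mem_Ici.1 ht]
  · have h : t = μ + 2 * Real.sqrt μ := le_antisymm h4 ht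
    subst h; ring
  · rfl

-- derivatives of the individual pieces
omit hμ0 in
lemma hasDerivAt_g1 (x : ℝ) :
    HasDerivAt (fun t : ℝ => t ^ 2 / (2 * μ)) (x / μ) x := by
  have h := (hasDerivAt_pow 2 x).div_const (2 * μ)
  refine h.congr_deriv ?_
  norm_num [mul_div_mul_left]

omit hμ0 in
lemma hasDerivAt_g2 (x : ℝ) :
    HasDerivAt (fun t : ℝ => (1 / 4) * (t - μ) ^ 2 + t - μ / 2)
      ((x - μ) / 2 + 1) x := by
  have h := ((((hasDerivAt_id x).sub_const μ).pow 2).const_mul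
      ((1:ℝ) / 4)).add (hasDerivAt_id x) |>.sub_const (μ / 2)
  refine h.congr_deriv ?_
  simp only [id_eq]
  ring

omit hμ0 in
lemma hasDerivAt_g3 (x : ℝ) :
    HasDerivAt (fun t : ℝ => -(1 / 4) * (t - μ - 2 * Real.sqrt μ) ^ 2 + t)
      (-(x - μ - 2 * Real.sqrt μ) / 2 + 1) x := by
  have h := (((((hasDerivAt_id x).sub_const μ).sub_const (2 * Real.sqrt μ)).pow 2).const_mul
      ((-(1/4) : ℝ))).add (hasDerivAt_id x)
  refine h.congr_deriv ?_
  simp only [id_eq]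
  ring

lemma hasDerivAt_psi (t : ℝ) : HasDerivAt (psi μ) (psiD μ t) t := by
  have hs : 0 < Real.sqrt μ := Real.sqrt_pos.2 hμ0
  rcases lt_trichotomy t 0 with h0 | h0 | h0
  · -- t < 0
    rw [psiD_eq0 hμ0 t h0.le]
    refine (hasDerivAt_const t (0:ℝ)).congr_of_eventuallyEq ?_
    filter_upwards [Iio_mem_nhds h0] with y hy
    exact psi_eq0 y (le_of_lt hy)
  · -- t = 0
    subst h0
    rw [psiD_eq0 hμ0 0 le_rfl]
    have hg : HasDerivAt (fun _ : ℝ => (0:ℝ)) 0 0 := hasDerivAt_const 0 0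
    have hh : HasDerivAt (fun t : ℝ => t ^ 2 / (2 * μ)) 0 0 := by
      simpa using hasDerivAt_g1 (μ := μ) 0
    have ev1 : psi μ =ᶠ[nhdsWithin 0 (Iic 0)] fun _ => (0:ℝ) := by
      filter_upwards [self_mem_nhdsWithin] with y hy
      exact psi_eq0 y hy
    have ev2 : psi μ =ᶠ[nhdsWithin 0 (Ici 0)] fun t => t ^ 2 / (2 * μ) := by
      filter_upwards [Icc_mem_nhdsGE_of_mem (⟨le_rfl, hμ0⟩ : (0:ℝ) ∈ Ico 0 μ)] with y hy
      exact psi_eq1 hμ0 y hy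
    exact glue_hasDerivAt hg hh ev1 ev2 (psi_eq0 0 le_rfl)
  rcases lt_trichotomy t μ with h1 | h1 | h1
  · -- 0 < t < μ
    rw [psiD_eq1 hμ0 t ⟨h0.le, h1.le⟩]
    refine (hasDerivAt_g1 t).congr_of_eventuallyEq ?_
    filter_upwards [Ioo_mem_nhds h0 h1] with y hy
    exact psi_eq1 hμ0 y ⟨hy.1.le, hy.2.le⟩
  · -- t = μ
    rw [h1]
    rw [psiD_eq1 hμ0 μ ⟨hμ0.le, le_rfl⟩, div_self hμ0.ne']
    have hg : HasDerivAt (fun s : ℝ => s ^ 2 / (2 * μ)) 1 μ := by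
      have := hasDerivAt_g1 (μ := μ) μ
      rwa [div_self hμ0.ne'] at this
    have hh : HasDerivAt (fun s : ℝ => (1 / 4) * (s - μ) ^ 2 + s - μ / 2) 1 μ := by
      have := hasDerivAt_g2 (μ := μ) μ
      convert this using 1
      ring
    have ev1 : psi μ =ᶠ[nhdsWithin μ (Iic μ)] fun s => s ^ 2 / (2 * μ) := by
      filter_upwards [Icc_mem_nhdsLE_of_mem (⟨hμ0, le_rfl⟩ : μ ∈ Ioc 0 μ)] with y hy
      exact psi_eq1 hμ0 y hy
    have ev2 : psi μ =ᶠ[nhdsWithin μ (Ici μ)]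
        fun s => (1 / 4) * (s - μ) ^ 2 + s - μ / 2 := by
      filter_upwards [Icc_mem_nhdsGE_of_mem
        (⟨le_rfl, by linarith⟩ : μ ∈ Ico μ (μ + Real.sqrt μ))] with y hy
      exact psi_eq2 hμ0 y hy
    exact glue_hasDerivAt hg hh ev1 ev2 (psi_eq1 hμ0 μ ⟨hμ0.le, le_rfl⟩)
  rcases lt_trichotomy t (μ + Real.sqrt μ) with h2 | h2 | h2
  · -- μ < t < μ + √μ
    rw [psiD_eq2 hμ0 t ⟨h1.le, h2.le⟩]
    refine (hasDerivAt_g2 t).congr_of_eventuallyEq ?_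
    filter_upwards [Ioo_mem_nhds h1 h2] with y hy
    exact psi_eq2 hμ0 y ⟨hy.1.le, hy.2.le⟩
  · -- t = μ + √μ
    rw [psiD_eq2 hμ0 t ⟨h1.le, h2.le⟩]
    have hg : HasDerivAt (fun s : ℝ => (1 / 4) * (s - μ) ^ 2 + s - μ / 2)
        ((t - μ) / 2 + 1) t := hasDerivAt_g2 t
    have hh : HasDerivAt (fun s : ℝ => -(1 / 4) * (s - μ - 2 * Real.sqrt μ) ^ 2 + s)
        ((t - μ) / 2 + 1) t := by
      have := hasDerivAt_g3 (μ := μ) t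
      convert this using 1
      rw [h2]; ring
    have ev1 : psi μ =ᶠ[nhdsWithin t (Iic t)]
        fun s => (1 / 4) * (s - μ) ^ 2 + s - μ / 2 := by
      filter_upwards [Icc_mem_nhdsLE_of_mem (⟨h1, le_rfl⟩ : t ∈ Ioc μ t)] with y hy
      exact psi_eq2 hμ0 y ⟨hy.1, h2 ▸ hy.2⟩
    have ev2 : psi μ =ᶠ[nhdsWithin t (Ici t)]
        fun s => -(1 / 4) * (s - μ - 2 * Real.sqrt μ) ^ 2 + s := by
      filter_upwards [Icc_mem_nhdsGE_of_mem
        (⟨le_rfl, by rw [h2]; linarith⟩ : t ∈ Ico t (μ + 2 * Real.sqrt μ))] with y hy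
      exact psi_eq3 hμ0 y ⟨by rw [← h2]; exact hy.1, hy.2⟩
    exact glue_hasDerivAt hg hh ev1 ev2 (psi_eq2 hμ0 t ⟨h1.le, h2.le⟩)
  rcases lt_trichotomy t (μ + 2 * Real.sqrt μ) with h3 | h3 | h3
  · -- μ + √μ < t < μ + 2√μ
    rw [psiD_eq3 hμ0 t ⟨h2.le, h3.le⟩]
    refine (hasDerivAt_g3 t).congr_of_eventuallyEq ?_
    filter_upwards [Ioo_mem_nhds h2 h3] with y hy
    exact psi_eq3 hμ0 y ⟨hy.1.le, hy.2.le⟩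
  · -- t = μ + 2√μ
    rw [psiD_eq3 hμ0 t ⟨h2.le, h3.le⟩]
    have hg : HasDerivAt (fun s : ℝ => -(1 / 4) * (s - μ - 2 * Real.sqrt μ) ^ 2 + s)
        (-(t - μ - 2 * Real.sqrt μ) / 2 + 1) t := hasDerivAt_g3 t
    have hh : HasDerivAt (fun s : ℝ => s) (-(t - μ - 2 * Real.sqrt μ) / 2 + 1) t := by
      have : HasDerivAt (fun s : ℝ => s) 1 t := hasDerivAt_id t
      convert this using 1
      rw [h3]; ring
    have ev1 : psi μ =ᶠ[nhdsWithin t (Iic t)]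
        fun s => -(1 / 4) * (s - μ - 2 * Real.sqrt μ) ^ 2 + s := by
      filter_upwards [Icc_mem_nhdsLE_of_mem
        (⟨h2, le_rfl⟩ : t ∈ Ioc (μ + Real.sqrt μ) t)] with y hy
      exact psi_eq3 hμ0 y ⟨hy.1, h3 ▸ hy.2⟩
    have ev2 : psi μ =ᶠ[nhdsWithin t (Ici t)] fun s => s := by
      filter_upwards [self_mem_nhdsWithin] with y hy
      exact psi_eq4 hμ0 y (by rw [← h3]; exact hy)
    exact glue_hasDerivAt hg hh ev1 ev2 (psi_eq3 hμ0 t ⟨h2.le, h3.le⟩)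
  · -- t > μ + 2√μ
    rw [psiD_eq4 hμ0 t (le_of_lt h3)]
    refine (hasDerivAt_id t).congr_of_eventuallyEq ?_
    filter_upwards [Ioi_mem_nhds h3] with y hy
    exact psi_eq4 hμ0 y (mem_Ici.2 (le_of_lt hy))

lemma psiD_nonneg (t : ℝ) : 0 ≤ psiD μ t := by
  have hs : 0 < Real.sqrt μ := Real.sqrt_pos.2 hμ0
  unfold psiD
  split_ifs with h1 h2 h3 h4
  · exact le_refl _
  · exact div_nonneg (le_of_lt (not_le.1 h1)) hμ0.le
  · linarith
  · linarith
  · norm_num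

lemma psiD_le (t : ℝ) : psiD μ t ≤ 1 + Real.sqrt μ / 2 := by
  have hs : 0 < Real.sqrt μ := Real.sqrt_pos.2 hμ0
  unfold psiD
  split_ifs with h1 h2 h3 h4
  · positivity
  · have : t / μ ≤ 1 := div_le_one_of_le₀ h2 hμ0.le
    linarith
  · linarith
  · linarith
  · linarith

lemma continuous_psiD : Continuous (psiD μ) := by
  have hs : 0 < Real.sqrt μ := Real.sqrt_pos.2 hμ0
  unfold psiD
  apply Continuous.if_le continuous_const ?_ continuous_id continuous_const
  · intro x hx
    simp only [id_eq] at hx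
    rw [hx, if_pos hμ0.le]
    simp
  · apply Continuous.if_le (by fun_prop) ?_ continuous_id continuous_const
    · intro x hx
      simp only [id_eq] at hx
      rw [hx, if_pos (by linarith : μ ≤ μ + Real.sqrt μ), div_self hμ0.ne']
      ring
    · apply Continuous.if_le (by fun_prop) ?_ continuous_id continuous_const
      · intro x hx
        simp only [id_eq] at hx
        rw [hx, if_pos (by linarith : μ + Real.sqrt μ ≤ μ + 2 * Real.sqrt μ)]
        ring
      · apply Continuous.if_le (by fun_prop) continuous_const continuous_id continuous_const
        intro x hx
        simp only [id_eq] at hx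
        rw [hx]
        ring

end pieces

/-- for fixed ,  is
continuously differentiable with , hence -Lipschitz. -/
theorem stmt14 (a b : ℝ) (hab : a < b) (μ : ℝ) (hμ : μ ∈ Set.Ioc (0 : ℝ) 1) :
    let φ : ℝ → ℝ := fun t => psi μ (a - t) + t - psi μ (t - b)
    ContDiff ℝ 1 φ ∧ (∀ t : ℝ, |deriv φ t| ≤ 1) ∧ LipschitzWith 1 φ := by
  intro φ
  obtain ⟨hμ0, hμ1⟩ := hμ
  have hs1 : Real.sqrt μ ≤ 1 := Real.sqrt_le_one.mpr hμ1
  have hs0 : 0 < Real.sqrt μ := Real.sqrt_pos.2 hμ0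
  -- derivative of φ
  have hd : ∀ x : ℝ, HasDerivAt φ (1 - psiD μ (a - x) - psiD μ (x - b)) x := by
    intro x
    have hinner1 : HasDerivAt (fun t : ℝ => a - t) (-1) x := by
      simpa using (hasDerivAt_id x).const_sub a
    have hinner2 : HasDerivAt (fun t : ℝ => t - b) 1 x := (hasDerivAt_id x).sub_const b
    have h1 : HasDerivAt (fun t : ℝ => psi μ (a - t)) (psiD μ (a - x) * (-1)) x :=
      (hasDerivAt_psi hμ0 (a - x)).comp x hinner1
    have h3 : HasDerivAt (fun t : ℝ => psi μ (t - b)) (psiD μ (x - b) * 1) x :=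
      (hasDerivAt_psi hμ0 (x - b)).comp (h₂ := fun t : ℝ => psi μ t) x hinner2
    have := (h1.add (hasDerivAt_id x)).sub h3
    refine this.congr_deriv ?_
    ring
  have hdiff : Differentiable ℝ φ := fun x => (hd x).differentiableAt
  have hderiv : deriv φ = fun x => 1 - psiD μ (a - x) - psiD μ (x - b) :=
    funext fun x => (hd x).deriv
  have hbound : ∀ t : ℝ, |deriv φ t| ≤ 1 := by
    intro t
    simp only [hderiv]
    have hu0 : 0 ≤ psiD μ (a - t) := psiD_nonneg hμ0 _
    have hv0 : 0 ≤ psiD μ (t - b) := psiD_nonneg hμ0 _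
    by_cases h : a - t ≤ 0
    · rw [psiD_eq0 hμ0 _ h]
      have hvle : psiD μ (t - b) ≤ 1 + Real.sqrt μ / 2 := psiD_le hμ0 _
      rw [abs_le]
      constructor <;> simp <;> linarith
    · have htb : t - b ≤ 0 := by linarith [not_le.1 h]
      rw [psiD_eq0 hμ0 _ htb]
      have hule : psiD μ (a - t) ≤ 1 + Real.sqrt μ / 2 := psiD_le hμ0 _
      rw [abs_le]
      constructor <;> simp <;> linarith
  refine ⟨?_, hbound, ?_⟩
  · rw [contDiff_one_iff_deriv]
    refine ⟨hdiff, ?_⟩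
    rw [hderiv]
    have hc := continuous_psiD hμ0
    fun_prop
  · apply lipschitzWith_of_nnnorm_deriv_le hdiff
    intro x
    have := hbound x
    rw [← Real.norm_eq_abs] at this
    rw [← NNReal.coe_le_coe, coe_nnnorm, NNReal.coe_one]
    exact this
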